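/- Let (G,·,∘) be a skew brace and let G' be a subset of G. Then G' is a strong left ideal of (G,·,∘) if and only if G' is both a left ideal of (G,·,∘) and a left ideal of the opposite skew brace (G,·op,∘), where σ ·op τ = τ·σ. -/

import Mathlib

def IsSkewBrace {G : Type*} (dot circ : Group G) : Prop :=
  ∀ σ τ κ : G,
    circ.mul σ (dot.mul τ κ) =
      dot.mul (dot.mul (circ.mul σ τ) (dot.inv σ)) (circ.mul σ κ)

def gammaFun {G : Type*} (dot circ : Group G) (σ τ : G) : G :=
  dot.mul (dot.inv σ) (circ.mul σ τ)

def IsSubgroupOf {G : Type*} (S : Group G) (H : Set G) : Prop :=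
  S.one ∈ H ∧ (∀ a ∈ H, ∀ b ∈ H, S.mul a b ∈ H) ∧ (∀ a ∈ H, S.inv a ∈ H)

def IsLeftIdeal {G : Type*} (dot circ : Group G) (H : Set G) : Prop :=
  IsSubgroupOf dot H ∧ ∀ σ : G, ∀ τ ∈ H, gammaFun dot circ σ τ ∈ H

def IsStrongLeftIdeal {G : Type*} (dot circ : Group G) (H : Set G) : Prop :=
  IsLeftIdeal dot circ H ∧
    ∀ σ : G, ∀ τ ∈ H, dot.mul (dot.mul σ τ) (dot.inv σ) ∈ H

def IsCharacteristicSubgroupOf {G : Type*} (S : Group G) (H : Set G) : Prop :=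
  IsSubgroupOf S H ∧
    ∀ f : G ≃ G, (∀ a b : G, f (S.mul a b) = S.mul (f a) (f b)) → ∀ a ∈ H, f a ∈ H

def oppGroup {G : Type*} (dot : Group G) : Group G :=
  letI := dot
  { mul := fun a b => b * a
    one := (1 : G)
    inv := fun a => a⁻¹
    div := fun a b => b⁻¹ * a
    div_eq_mul_inv := fun _ _ => rfl
    npow := fun n a => a ^ n
    npow_zero := fun a => pow_zero a
    npow_succ := fun n a => pow_succ' a n
    zpow := fun n a => a ^ n
    zpow_zero' := fun a => zpow_zero a
    zpow_succ' := by
      intro n a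
      show a ^ ((n.succ : ℕ) : ℤ) = a * a ^ (n : ℤ)
      rw [zpow_natCast, zpow_natCast, pow_succ']
    zpow_neg' := by
      intro n a
      show a ^ Int.negSucc n = (a ^ ((n.succ : ℕ) : ℤ))⁻¹
      rw [zpow_negSucc, zpow_natCast]
    mul_assoc := fun a b c => (mul_assoc c b a).symm
    one_mul := fun a => mul_one a
    mul_one := fun a => one_mul a
    inv_mul_cancel := fun a => mul_inv_cancel a }

def lam {G : Type*} (S : Group G) (σ : G) : Equiv.Perm G :=
  letI := S; Equiv.mulLeft σ

def rho {G : Type*} (S : Group G) (σ : G) : Equiv.Perm G :=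
  letI := S; Equiv.mulRight σ⁻¹

section Helpers
variable {G : Type*} (dot circ : Group G)

theorem sb_circ_one (h : IsSkewBrace dot circ) (σ : G) :
    circ.mul σ dot.one = σ := by
  letI := dot
  have hx : circ.mul σ (1 * 1) = circ.mul σ 1 * σ⁻¹ * circ.mul σ 1 := h σ 1 1
  rw [one_mul] at hx
  have h2 : (1 : G) * circ.mul σ 1 = circ.mul σ 1 * σ⁻¹ * circ.mul σ 1 := by
    rw [one_mul]; exact hx
  have h3 := mul_right_cancel h2
  have h4 : circ.mul σ 1 = σ := by
    have := congrArg (fun x => x * σ) h3.symm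
    simpa using this
  exact h4

theorem sb_one_eq (h : IsSkewBrace dot circ) : circ.one = dot.one := by
  have h1 := sb_circ_one dot circ h circ.one
  have h2 : circ.mul circ.one dot.one = dot.one := by
    letI := circ
    exact one_mul _
  rw [h2] at h1
  exact h1.symm

theorem sb_gamma_mul (h : IsSkewBrace dot circ) (σ τ κ : G) :
    gammaFun dot circ σ (dot.mul τ κ) =
      dot.mul (gammaFun dot circ σ τ) (gammaFun dot circ σ κ) := by
  letI := dot
  show σ⁻¹ * circ.mul σ (τ * κ) = (σ⁻¹ * circ.mul σ τ) * (σ⁻¹ * circ.mul σ κ)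
  have hh : circ.mul σ (τ * κ) = circ.mul σ τ * σ⁻¹ * circ.mul σ κ := h σ τ κ
  rw [hh]
  simp [mul_assoc]

theorem sb_gamma_one (h : IsSkewBrace dot circ) (σ : G) :
    gammaFun dot circ σ dot.one = dot.one := by
  letI := dot
  show σ⁻¹ * circ.mul σ 1 = 1
  have h1 : circ.mul σ (1:G) = σ := sb_circ_one dot circ h σ
  rw [h1]
  exact inv_mul_cancel σ

theorem sb_gamma_inv_circ (h : IsSkewBrace dot circ) (σ : G) :
    gammaFun dot circ σ (circ.inv σ) = dot.inv σ := by
  letI := dot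
  show σ⁻¹ * circ.mul σ (circ.inv σ) = σ⁻¹
  have h1 : circ.mul σ (circ.inv σ) = circ.one := by
    letI := circ; exact mul_inv_cancel σ
  rw [h1, sb_one_eq dot circ h]
  show σ⁻¹ * 1 = σ⁻¹
  exact mul_one _

theorem sb_gamma_dotinv_circinv (h : IsSkewBrace dot circ) (σ : G) :
    gammaFun dot circ σ (dot.inv (circ.inv σ)) = σ := by
  letI := dot
  have h1 : gammaFun dot circ σ (dot.mul (circ.inv σ) (dot.inv (circ.inv σ))) =
      dot.mul (gammaFun dot circ σ (circ.inv σ)) (gammaFun dot circ σ (dot.inv (circ.inv σ))) :=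
    sb_gamma_mul dot circ h σ _ _
  have h2 : dot.mul (circ.inv σ) (dot.inv (circ.inv σ)) = dot.one := mul_inv_cancel _
  rw [h2, sb_gamma_one dot circ h, sb_gamma_inv_circ dot circ h] at h1
  have h3 : (1 : G) = σ⁻¹ * gammaFun dot circ σ (dot.inv (circ.inv σ)) := h1
  have := congrArg (fun x => σ * x) h3
  simpa [mul_assoc] using this.symm

theorem sb_gamma_gamma (h : IsSkewBrace dot circ) (σ τ : G) :
    gammaFun dot circ σ (gammaFun dot circ (circ.inv σ) τ) = τ := by
  letI := dot
  have hexp : gammaFun dot circ (circ.inv σ) τ =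
      dot.mul (dot.inv (circ.inv σ)) (circ.mul (circ.inv σ) τ) := rfl
  rw [hexp, sb_gamma_mul dot circ h, sb_gamma_dotinv_circinv dot circ h]
  have h1 : circ.mul σ (circ.mul (circ.inv σ) τ) = τ := by
    letI := circ; exact mul_inv_cancel_left σ τ
  show σ * (σ⁻¹ * circ.mul σ (circ.mul (circ.inv σ) τ)) = τ
  rw [h1]
  exact mul_inv_cancel_left σ τ

theorem sb_gamma_opp (h : IsSkewBrace dot circ) (σ τ : G) :
    gammaFun (oppGroup dot) circ σ τ =
      dot.mul (dot.mul σ (gammaFun dot circ σ τ)) (dot.inv σ) := by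
  letI := dot
  show circ.mul σ τ * σ⁻¹ = σ * (σ⁻¹ * circ.mul σ τ) * σ⁻¹
  rw [mul_inv_cancel_left]

end Helpers

/-- A subset `G'` is a strong left ideal of a skew brace `(G,·,∘)` iff it is a
left ideal of both `(G,·,∘)` and the opposite skew brace `(G,·op,∘)`. -/
theorem stmt6 {G : Type*} (dot circ : Group G) (h : IsSkewBrace dot circ) (H : Set G) :
    IsStrongLeftIdeal dot circ H ↔
      IsLeftIdeal dot circ H ∧ IsLeftIdeal (oppGroup dot) circ H := by
  constructor
  · rintro ⟨⟨hsub, hgam⟩, hconj⟩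
    refine ⟨⟨hsub, hgam⟩, ⟨hsub.1, fun a ha b hb => hsub.2.1 b hb a ha, hsub.2.2⟩,
      fun σ τ hτ => ?_⟩
    rw [sb_gamma_opp dot circ h σ τ]
    exact hconj σ _ (hgam σ τ hτ)
  · rintro ⟨⟨hsub, hgam⟩, ⟨_, hgop⟩⟩
    refine ⟨⟨hsub, hgam⟩, fun σ τ hτ => ?_⟩
    have hτ' : gammaFun dot circ (circ.inv σ) τ ∈ H := hgam _ τ hτ
    have hmem := hgop σ _ hτ'
    rw [sb_gamma_opp dot circ h, sb_gamma_gamma dot circ h] at hmem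
    exact hmem
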